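/- Let r be a Gaussian random variable with mean 1 and variance s² = b₂²/(2b₁), and θ a fixed angle. Then E[r cos(r + θ − 1)] = e^{−s²/2}·sqrt(1 + s⁴)·cos(θ + θ_s) and E[r sin(r + θ − 1)] = e^{−s²/2}·sqrt(1 + s⁴)·sin(θ + θ_s), where θ_s = arctan(s²). In particular, the averaged slow manifold of the oscillating half-moons system in Cartesian coordinates (z₁, z₂) = (r cos(θ + r − 1), r sin(θ + r − 1)) is a circle of radius r̄ = e^{−b₂²/(4b₁)}·sqrt(1 + (b₂²/(2b₁))²) with angular shift θ_s = arctan(b₂²/(2b₁)). -/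

import Mathlib

open MeasureTheory ProbabilityTheory Complex Real Set Filter

lemma aux_integrable {b : ℂ} (hb : b.re < 0) (c d : ℂ) :
    Integrable fun x : ℝ ↦ (x : ℂ) * Complex.exp (b * x ^ 2 + c * x + d) := by
  set ε : ℝ := -b.re / 2 with hε
  have hε0 : 0 < ε := by simp only [hε]; linarith
  have hint : Integrable fun x : ℝ ↦ |x| * Real.exp (-ε * x ^ 2) := by
    have h := (integrable_mul_exp_neg_mul_sq hε0).abs
    exact h.congr (ae_of_all _ fun x ↦ by
      simp [abs_mul, abs_of_pos (Real.exp_pos _)])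
  refine ((hint.const_mul (Real.exp (d.re + c.re ^ 2 / (4 * ε)))).mono'
    ?_ (ae_of_all _ fun x ↦ ?_))
  · exact (Complex.continuous_ofReal.mul (Complex.continuous_exp.comp
      (by continuity))).aestronglyMeasurable
  · have hre : (b * (x:ℂ) ^ 2 + c * x + d).re = b.re * x ^ 2 + c.re * x + d.re := by
      simp [Complex.add_re, Complex.mul_re, Complex.ofReal_re, Complex.ofReal_im, ← Complex.ofReal_pow]
    rw [norm_mul, Complex.norm_exp, hre,
      Complex.norm_real, Real.norm_eq_abs]
    have hle : b.re * x ^ 2 + c.re * x + d.re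
        ≤ -ε * x ^ 2 + (d.re + c.re ^ 2 / (4 * ε)) := by
      have hbe : b.re = -(2 * ε) := by rw [hε]; ring
      have key : c.re * x - ε * x ^ 2 ≤ c.re ^ 2 / (4 * ε) := by
        rw [le_div_iff₀ (by linarith : (0:ℝ) < 4 * ε)]
        nlinarith [sq_nonneg (2 * ε * x - c.re)]
      rw [hbe]; linarith
    calc |x| * Real.exp (b.re * x ^ 2 + c.re * x + d.re)
        ≤ |x| * Real.exp (-ε * x ^ 2 + (d.re + c.re ^ 2 / (4 * ε))) :=
          mul_le_mul_of_nonneg_left (Real.exp_le_exp.mpr hle) (abs_nonneg x)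
      _ = Real.exp (d.re + c.re ^ 2 / (4 * ε)) * (|x| * Real.exp (-ε * x ^ 2)) := by
          rw [Real.exp_add]; ring

lemma aux_deriv_zero {b : ℂ} (hb : b.re < 0) (c d : ℂ) :
    ∫ x : ℝ, (2 * b * x + c) * Complex.exp (b * x ^ 2 + c * x + d) = 0 := by
  have hF : ∀ x : ℝ, HasDerivAt (fun y : ℝ ↦ Complex.exp (b * y ^ 2 + c * y + d))
      ((2 * b * x + c) * Complex.exp (b * x ^ 2 + c * x + d)) x := by
    intro x
    have h1 : HasDerivAt (fun z : ℂ ↦ b * z ^ 2 + c * z + d) (2 * b * x + c) (x : ℂ) := by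
      have := (((hasDerivAt_pow 2 (x : ℂ)).const_mul b).add
        ((hasDerivAt_id (x : ℂ)).const_mul c)).add_const d
      exact this.congr_deriv (by simp; ring)
    have h2 := h1.cexp
    rw [mul_comm] at h2
    exact h2.comp_ofReal
  have hf' : Integrable fun x : ℝ ↦ (2 * b * x + c) * Complex.exp (b * x ^ 2 + c * x + d) := by
    have h1 := (aux_integrable hb c d).const_mul (2 * b)
    have h2 := (integrable_cexp_quadratic' hb c d).const_mul c
    exact (h1.add h2).congr (ae_of_all _ fun x ↦ by simp; ring)
  exact integral_eq_zero_of_hasDerivAt_of_integrable hF hf' (integrable_cexp_quadratic' hb c d)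

lemma aux_x_integral {b : ℂ} (hb : b.re < 0) (c d : ℂ) :
    ∫ x : ℝ, (x : ℂ) * Complex.exp (b * x ^ 2 + c * x + d)
      = -c / (2 * b) * ((↑Real.pi / -b) ^ (1 / 2 : ℂ) * Complex.exp (d - c ^ 2 / (4 * b))) := by
  have hb0 : b ≠ 0 := fun h ↦ by simp [h] at hb
  have h0 := aux_deriv_zero hb c d
  have hsplit : (fun x : ℝ ↦ (2 * b * x + c) * Complex.exp (b * x ^ 2 + c * x + d))
      = fun x : ℝ ↦ 2 * b * ((x : ℂ) * Complex.exp (b * x ^ 2 + c * x + d))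
        + c * Complex.exp (b * x ^ 2 + c * x + d) := funext fun x ↦ by ring
  rw [hsplit, integral_add ((aux_integrable hb c d).const_mul _)
    ((integrable_cexp_quadratic' hb c d).const_mul _), integral_const_mul, integral_const_mul,
    integral_cexp_quadratic hb c d] at h0
  have h2b : (2 * b) ≠ 0 := by simpa using hb0
  set Q := (↑Real.pi / -b) ^ (1 / 2 : ℂ) * Complex.exp (d - c ^ 2 / (4 * b)) with hQ
  set X := ∫ x : ℝ, (x : ℂ) * Complex.exp (b * x ^ 2 + c * x + d) with hX
  rw [← mul_assoc] at h0
  field_simp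
  linear_combination h0

lemma aux_integral_gaussianReal (m : ℝ) {v : NNReal} (hv : v ≠ 0) (g : ℝ → ℝ) :
    ∫ x, g x ∂(gaussianReal m v) = ∫ x, gaussianPDFReal m v x * g x := by
  rw [gaussianReal_of_var_ne_zero _ hv]
  have hd : gaussianPDF m v = fun x ↦ ((gaussianPDFReal m v x).toNNReal : ENNReal) := rfl
  rw [hd, integral_withDensity_eq_integral_smul (measurable_gaussianPDFReal m v).real_toNNReal]
  congr 1
  ext x
  rw [NNReal.smul_def, smul_eq_mul, Real.coe_toNNReal _ (gaussianPDFReal_nonneg _ _ _)]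


section
variable (s2 θ : ℝ) (hv : 0 < s2)

-- complex parameters
noncomputable def bb (s2 : ℝ) : ℂ := ((-(1 / (2 * s2)) : ℝ) : ℂ)
noncomputable def cc (s2 : ℝ) : ℂ := ((1 / s2 : ℝ) : ℂ) + Complex.I
noncomputable def dd (s2 θ : ℝ) : ℂ := ((-(1 / (2 * s2)) : ℝ) : ℂ) + (((θ - 1 : ℝ)) : ℂ) * Complex.I

include hv in
lemma hbre : (bb s2).re < 0 := by
  simp only [bb, Complex.ofReal_re]
  have : 0 < 1 / (2 * s2) := by positivity
  linarith

include hv in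
lemma point_eq (x : ℝ) :
    Complex.exp (bb s2 * x ^ 2 + cc s2 * x + dd s2 θ)
      = (Real.exp (-(x - 1) ^ 2 / (2 * s2)) : ℂ) * Complex.exp ((x + θ - 1 : ℝ) * Complex.I) := by
  rw [Complex.ofReal_exp, ← Complex.exp_add]
  congr 1
  have hs : (s2 : ℂ) ≠ 0 := by exact_mod_cast hv.ne'
  simp only [bb, cc, dd]
  push_cast
  field_simp
  ring

end

section
variable (s2 θ : ℝ) (hv : 0 < s2)

include hv in
lemma hval1 : -(cc s2) / (2 * bb s2) = 1 + (s2 : ℂ) * Complex.I := by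
  have hs : (s2 : ℂ) ≠ 0 := by exact_mod_cast hv.ne'
  simp only [bb, cc]
  push_cast
  field_simp

include hv in
lemma hval2 : ((Real.pi : ℂ) / -(bb s2)) ^ (1 / 2 : ℂ) = (Real.sqrt (2 * Real.pi * s2) : ℂ) := by
  have hs : (s2 : ℂ) ≠ 0 := by exact_mod_cast hv.ne'
  have h : ((Real.pi : ℂ) / -(bb s2)) = ((2 * Real.pi * s2 : ℝ) : ℂ) := by
    simp only [bb]; push_cast; field_simp
  rw [h, show (1 / 2 : ℂ) = ((1 / 2 : ℝ) : ℂ) by norm_num,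
    ← Complex.ofReal_cpow (by positivity), Real.sqrt_eq_rpow]

include hv in
lemma hval3 : dd s2 θ - (cc s2) ^ 2 / (4 * bb s2) = ((-(s2 / 2) : ℝ) : ℂ) + (θ : ℂ) * Complex.I := by
  have hs : (s2 : ℂ) ≠ 0 := by exact_mod_cast hv.ne'
  simp only [bb, cc, dd]
  push_cast
  field_simp
  linear_combination (4 * (s2:ℂ) ^ 2) * Complex.I_sq

lemma hval4 : Complex.exp (((-(s2 / 2) : ℝ) : ℂ) + (θ : ℂ) * Complex.I)
    = ((Real.exp (-(s2 / 2)) : ℝ) : ℂ)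
      * (((Real.cos θ : ℝ) : ℂ) + ((Real.sin θ : ℝ) : ℂ) * Complex.I) := by
  rw [Complex.exp_add, Complex.exp_mul_I, ← Complex.ofReal_exp, Complex.ofReal_cos,
    Complex.ofReal_sin]

end

section
variable (s2 θ : ℝ) (hv : 0 < s2)

include hv in
lemma gauss_complex_integral :
    ∫ x : ℝ, (((Real.sqrt (2 * Real.pi * s2))⁻¹ : ℝ) : ℂ)
        * ((x : ℂ) * Complex.exp (bb s2 * x ^ 2 + cc s2 * x + dd s2 θ))
      = ((Real.exp (-(s2 / 2)) : ℝ) : ℂ)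
        * ((1 + (s2 : ℂ) * Complex.I)
          * (((Real.cos θ : ℝ) : ℂ) + ((Real.sin θ : ℝ) : ℂ) * Complex.I)) := by
  rw [integral_const_mul, aux_x_integral (hbre s2 hv) (cc s2) (dd s2 θ), hval1 s2 hv,
    hval2 s2 hv, hval3 s2 θ hv, hval4]
  have hsq : ((Real.sqrt (2 * Real.pi * s2) : ℝ) : ℂ) ≠ 0 := by
    exact_mod_cast (Real.sqrt_pos.mpr (by positivity)).ne'
  rw [Complex.ofReal_inv]
  generalize ((Real.sqrt (2 * Real.pi * s2) : ℝ) : ℂ) = w at hsq ⊢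
  field_simp

include hv in
lemma gauss_complex_value :
    (∫ x : ℝ, (((Real.sqrt (2 * Real.pi * s2))⁻¹ : ℝ) : ℂ)
        * ((x : ℂ) * Complex.exp (bb s2 * x ^ 2 + cc s2 * x + dd s2 θ)))
      = ((Real.exp (-(s2 / 2)) * (Real.cos θ - s2 * Real.sin θ) : ℝ) : ℂ)
        + ((Real.exp (-(s2 / 2)) * (Real.sin θ + s2 * Real.cos θ) : ℝ) : ℂ) * Complex.I := by
  rw [gauss_complex_integral s2 θ hv]
  push_cast
  linear_combination (Complex.exp (-((s2:ℂ) / 2)) * (s2 : ℂ) * Complex.sin (θ:ℂ)) * Complex.I_sq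

end

/-- For `r` Gaussian with mean `1` and variance `s² = b₂²/(2b₁)`,
`E[r cos(r + θ − 1)] = e^{−s²/2} √(1 + s⁴) cos(θ + θ_s)` and
`E[r sin(r + θ − 1)] = e^{−s²/2} √(1 + s⁴) sin(θ + θ_s)` with `θ_s = arctan s²`;
hence the averaged slow manifold of the oscillating half-moons system is the circle of radius
`r̄ = e^{−b₂²/(4b₁)} √(1 + (b₂²/(2b₁))²)` with angular shift `θ_s = arctan(b₂²/(2b₁))`. -/
theorem stmt16 (b1 b2 θ : ℝ) (hb1 : 0 < b1) (hb2 : 0 < b2) :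
    let s2 : ℝ := b2 ^ 2 / (2 * b1)
    let rbar : ℝ := Real.exp (-(b2 ^ 2 / (4 * b1))) * Real.sqrt (1 + s2 ^ 2)
    let θs : ℝ := Real.arctan s2
    (∫ r, r * Real.cos (r + θ - 1) ∂(gaussianReal 1 s2.toNNReal)
        = rbar * Real.cos (θ + θs)) ∧
    (∫ r, r * Real.sin (r + θ - 1) ∂(gaussianReal 1 s2.toNNReal)
        = rbar * Real.sin (θ + θs)) := by
  intro s2 rbar θs
  have hs2 : s2 = b2 ^ 2 / (2 * b1) := rfl
  have hrbar : rbar = Real.exp (-(b2 ^ 2 / (4 * b1))) * Real.sqrt (1 + s2 ^ 2) := rfl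
  have hθs : θs = Real.arctan s2 := rfl
  have hv : 0 < s2 := by rw [hs2]; positivity
  have hne : s2.toNNReal ≠ 0 := (Real.toNNReal_pos.mpr hv).ne'
  have hco : ((s2.toNNReal : ℝ)) = s2 := Real.coe_toNNReal _ hv.le
  set f : ℝ → ℂ := fun x ↦ (((Real.sqrt (2 * Real.pi * s2))⁻¹ : ℝ) : ℂ)
    * ((x : ℝ) * Complex.exp (bb s2 * x ^ 2 + cc s2 * x + dd s2 θ)) with hf
  have hpt : ∀ x : ℝ, f x
      = ((gaussianPDFReal 1 s2.toNNReal x * (x * Real.cos (x + θ - 1)) : ℝ) : ℂ)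
        + ((gaussianPDFReal 1 s2.toNNReal x * (x * Real.sin (x + θ - 1)) : ℝ) : ℂ)
          * Complex.I := by
    intro x
    rw [hf]
    simp only
    rw [point_eq s2 θ hv x, Complex.exp_mul_I, ← Complex.ofReal_cos, ← Complex.ofReal_sin]
    simp only [gaussianPDFReal, hco]
    push_cast
    ring
  have hInt : Integrable f :=
    (aux_integrable (hbre s2 hv) (cc s2) (dd s2 θ)).const_mul _
  have hval : ∫ x : ℝ, f x
      = ((Real.exp (-(s2 / 2)) * (Real.cos θ - s2 * Real.sin θ) : ℝ) : ℂ)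
        + ((Real.exp (-(s2 / 2)) * (Real.sin θ + s2 * Real.cos θ) : ℝ) : ℂ) * Complex.I :=
    gauss_complex_value s2 θ hv
  have hroot : Real.sqrt (1 + s2 ^ 2) ≠ 0 := (Real.sqrt_pos.mpr (by positivity)).ne'
  have hexp : Real.exp (-(b2 ^ 2 / (4 * b1))) = Real.exp (-(s2 / 2)) := by
    rw [hs2]; ring_nf
  constructor
  · rw [aux_integral_gaussianReal 1 hne]
    have hre : (fun x : ℝ ↦ gaussianPDFReal 1 s2.toNNReal x * (x * Real.cos (x + θ - 1)))
        = fun x ↦ (f x).re := funext fun x ↦ by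
      rw [hpt x]
      simp only [Complex.add_re, Complex.ofReal_re, Complex.mul_re, Complex.ofReal_im,
        Complex.I_re, Complex.I_im]
      ring
    rw [hre]
    have h1 := Complex.reCLM.integral_comp_comm hInt
    simp only [Complex.reCLM_apply] at h1
    rw [h1, hval]
    simp only [Complex.add_re, Complex.ofReal_re, Complex.mul_re, Complex.I_re,
      Complex.ofReal_im, Complex.I_im]
    rw [hrbar, hθs, hexp, Real.cos_add, Real.cos_arctan, Real.sin_arctan]
    field_simp
    ring
  · rw [aux_integral_gaussianReal 1 hne]
    have him : (fun x : ℝ ↦ gaussianPDFReal 1 s2.toNNReal x * (x * Real.sin (x + θ - 1)))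
        = fun x ↦ (f x).im := funext fun x ↦ by
      rw [hpt x]
      simp only [Complex.add_im, Complex.ofReal_im, Complex.mul_im, Complex.ofReal_re,
        Complex.I_re, Complex.I_im]
      ring
    rw [him]
    have h1 := Complex.imCLM.integral_comp_comm hInt
    simp only [Complex.imCLM_apply] at h1
    rw [h1, hval]
    simp only [Complex.add_im, Complex.ofReal_im, Complex.mul_im, Complex.I_im,
      Complex.ofReal_re, Complex.I_re]
    rw [hrbar, hθs, hexp, Real.sin_add, Real.cos_arctan, Real.sin_arctan]
    field_simp
    ring
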